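/- Let ψ ∈ ℂ and let L ⊆ ℂ⁶ be a 2-dimensional ℂ-linear subspace such that every point (u,v,w,x,y,z) ∈ L satisfies v + w + x + y + z = 5ψu and vwxyz = u⁵. Then u = 0 for every point of L, and moreover there exists one of the five coordinates t ∈ {v,w,x,y,z} such that t = 0 for every point of L. (Equivalently: every line contained in the singular mirror quintic Y_ψ ⊂ ℙ⁵ is contained in one of the five planes {u = 0, t = 0}, t ∈ {v,w,x,y,z}.) -/
import Mathlib


/-- Every line contained in the singular mirror quintic `Y_ψ ⊂ ℙ⁵` (given as a
2-dimensional linear subspace `L ⊆ ℂ⁶` on which both defining equations hold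
identically, with coordinates `(u,v,w,x,y,z) = (p 0, p 1, p 2, p 3, p 4, p 5)`)
satisfies `u ≡ 0` on `L`, and moreover one of the five coordinates
`v,w,x,y,z` vanishes identically on `L`. -/
theorem line_in_mirror_quintic_lies_in_a_plane (ψ : ℂ)
    (L : Submodule ℂ (Fin 6 → ℂ)) (hdim : Module.finrank ℂ L = 2)
    (heq1 : ∀ p ∈ L, p 1 + p 2 + p 3 + p 4 + p 5 = 5 * ψ * p 0)
    (heq2 : ∀ p ∈ L, p 1 * p 2 * p 3 * p 4 * p 5 = p 0 ^ 5) :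
    (∀ p ∈ L, p 0 = 0) ∧ ∃ i : Fin 6, i ≠ 0 ∧ ∀ p ∈ L, p i = 0 := by
  -- Claim A: if some coordinate `i ≠ 0` of a point of `L` vanishes, then so does its
  -- zeroth coordinate.
  have hA : ∀ p ∈ L, ∀ i : Fin 6, i ≠ 0 → p i = 0 → p 0 = 0 := by
    intro p hp i hi h0
    have h2 := heq2 p hp
    have h5 : p 0 ^ 5 = 0 := by
      rw [← h2]
      fin_cases i <;> simp_all
    exact pow_eq_zero_iff (by norm_num) |>.mp h5
  -- Part 1: u ≡ 0 on L.
  have h0 : ∀ p ∈ L, p 0 = 0 := by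
    by_contra h
    push_neg at h
    obtain ⟨p, hp, hp0⟩ := h
    -- the span of p is a proper subspace of L
    have hne : (⟨p, hp⟩ : L) ≠ 0 := by
      intro hz
      apply hp0
      have : p = 0 := congrArg Subtype.val hz
      simp [this]
    have hlt : Submodule.span ℂ {(⟨p, hp⟩ : L)} ≠ ⊤ := by
      intro htop
      have h1 := finrank_span_singleton (K := ℂ) hne
      rw [htop, finrank_top, hdim] at h1
      norm_num at h1
    obtain ⟨q, hq⟩ : ∃ q : L, q ∉ Submodule.span ℂ {(⟨p, hp⟩ : L)} := by
      by_contra hall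
      push_neg at hall
      exact hlt (top_unique fun x _ => hall x)
    have key : ∀ i : Fin 6, i ≠ 0 → (q : Fin 6 → ℂ) i * p 0 = (q : Fin 6 → ℂ) 0 * p i := by
      intro i hi
      set r : Fin 6 → ℂ := p i • (q : Fin 6 → ℂ) - (q : Fin 6 → ℂ) i • p with hr
      have hrL : r ∈ L := L.sub_mem (L.smul_mem _ q.2) (L.smul_mem _ hp)
      have hri : r i = 0 := by simp [hr]; ring
      have hr0 : r 0 = 0 := hA r hrL i hi hri
      have hsub : p i * (q : Fin 6 → ℂ) 0 - (q : Fin 6 → ℂ) i * p 0 = 0 := by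
        simpa [hr] using hr0
      linear_combination -hsub
    apply hq
    rw [Submodule.mem_span_singleton]
    refine ⟨(q : Fin 6 → ℂ) 0 / p 0, ?_⟩
    apply Subtype.ext
    funext i
    show ((q : Fin 6 → ℂ) 0 / p 0) * p i = (q : Fin 6 → ℂ) i
    rcases eq_or_ne i 0 with rfl | hi
    · field_simp
    · have hk := key i hi
      field_simp
      linear_combination -hk
  refine ⟨h0, ?_⟩
  -- Part 2: pick a basis a, b of L.
  haveI : FiniteDimensional ℂ L := FiniteDimensional.finiteDimensional_submodule L
  set B := Module.finBasisOfFinrankEq ℂ L hdim with hB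
  set a : Fin 6 → ℂ := ((B 0 : L) : Fin 6 → ℂ) with ha
  set b : Fin 6 → ℂ := ((B 1 : L) : Fin 6 → ℂ) with hb
  have hmem : ∀ n : ℕ, (b + (n : ℂ) • a) ∈ L :=
    fun n => L.add_mem (B 1).2 (L.smul_mem _ (B 0).2)
  have hchoice : ∀ n : ℕ, ∃ i : Fin 6, i ≠ 0 ∧ b i + (n : ℂ) * a i = 0 := by
    intro n
    have h2 := heq2 _ (hmem n)
    rw [h0 _ (hmem n)] at h2
    have h2' : (b 1 + (n:ℂ) * a 1) * (b 2 + (n:ℂ) * a 2) * (b 3 + (n:ℂ) * a 3) *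
        (b 4 + (n:ℂ) * a 4) * (b 5 + (n:ℂ) * a 5) = 0 := by
      simpa [Pi.add_apply, Pi.smul_apply, smul_eq_mul] using h2
    simp only [mul_eq_zero] at h2'
    rcases h2' with (((h | h) | h) | h) | h
    · exact ⟨1, by decide, h⟩
    · exact ⟨2, by decide, h⟩
    · exact ⟨3, by decide, h⟩
    · exact ⟨4, by decide, h⟩
    · exact ⟨5, by decide, h⟩
  choose f hf1 hf2 using hchoice
  have hmap : ∀ n ∈ Finset.range 6, f n ∈ Finset.univ.erase (0 : Fin 6) :=
    fun n _ => Finset.mem_erase.mpr ⟨hf1 n, Finset.mem_univ _⟩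
  obtain ⟨m, hm, n, hn, hmn, hfeq⟩ :=
    Finset.exists_ne_map_eq_of_card_lt_of_maps_to (by simp) hmap
  have hcast : (m : ℂ) ≠ (n : ℂ) := by exact_mod_cast hmn
  have hai : a (f m) = 0 := by
    have e1 := hf2 m
    have e2 := hf2 n
    rw [← hfeq] at e2
    have hz : ((m : ℂ) - n) * a (f m) = 0 := by linear_combination e1 - e2
    rcases mul_eq_zero.mp hz with h | h
    · exact absurd (by linear_combination h) hcast
    · exact h
  have hbi : b (f m) = 0 := by
    have e1 := hf2 m
    rw [hai] at e1
    simpa using e1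
  refine ⟨f m, hf1 m, ?_⟩
  intro p hp
  have hrep := B.sum_repr ⟨p, hp⟩
  rw [Fin.sum_univ_two] at hrep
  have hco := congrArg (fun v : L => (v : Fin 6 → ℂ) (f m)) hrep
  simp only [Submodule.coe_add, SetLike.val_smul, Pi.add_apply, Pi.smul_apply,
    smul_eq_mul, ← ha, ← hb, hai, hbi] at hco
  simpa using hco.symm
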